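/- Every finite split graph is permutationally 1-11-representable. -/

import Mathlib

/-- The subsequence of `w` consisting of all occurrences of `x` and `y`. -/
def restrictWord {V : Type*} [DecidableEq V] (w : List V) (x y : V) : List V :=
  w.filter (fun z => decide (z = x ∨ z = y))

/-- The number of occurrences of the consecutive pattern 11 in a word:
the number of indices `i` such that the `i`-th and `(i+1)`-th letters are equal. -/
def pattern11Count {V : Type*} [DecidableEq V] (l : List V) : ℕ :=
  ((l.zip l.tail).filter (fun p => decide (p.1 = p.2))).length

/-- A word `w` over `V` `k`-11-represents the simple graph `G` if every vertex occurs in `w`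
and, for all distinct `x y`, `xy` is an edge iff `w|_{x,y}` has at most `k` occurrences of
the pattern 11. -/
def Represents {V : Type*} [DecidableEq V] (k : ℕ) (w : List V) (G : SimpleGraph V) : Prop :=
  (∀ v : V, v ∈ w) ∧
  ∀ x y : V, x ≠ y → (G.Adj x y ↔ pattern11Count (restrictWord w x y) ≤ k)

/-- A graph is `k`-11-representable if some word `k`-11-represents it. -/
def Representable {V : Type*} [DecidableEq V] (k : ℕ) (G : SimpleGraph V) : Prop :=
  ∃ w : List V, Represents k w G

/-- A word that is a permutation of the vertex set: each vertex occurs exactly once. -/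
def IsPermWord {V : Type*} (p : List V) : Prop :=
  p.Nodup ∧ ∀ v : V, v ∈ p

/-- A graph is permutationally `k`-11-representable if some concatenation of permutations
of the vertex set `k`-11-represents it. -/
def PermRepresentable {V : Type*} [DecidableEq V] (k : ℕ) (G : SimpleGraph V) : Prop :=
  ∃ ps : List (List V), (∀ p ∈ ps, IsPermWord p) ∧ Represents k ps.flatten G


namespace Stmt5Aux

/-- number of changes in a boolean sequence -/
def flips : List Bool → ℕ
  | [] => 0
  | [_] => 0
  | a :: b :: l => (if a = b then 0 else 1) + flips (b :: l)

lemma flips_cons_cons (a b : Bool) (l : List Bool) :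
    flips (a :: b :: l) = (if a = b then 0 else 1) + flips (b :: l) := rfl

lemma flips_all_eq {u : Bool} : ∀ l : List Bool, (∀ b ∈ l, b = u) → flips l = 0
  | [], _ => rfl
  | [_], _ => rfl
  | a :: b :: l, h => by
      have ha : a = u := h a (by simp)
      have hb : b = u := h b (by simp)
      rw [flips_cons_cons, if_pos (ha.trans hb.symm),
        flips_all_eq (b :: l) (fun c hc => h c (List.mem_cons_of_mem _ hc))]

lemma flips_le_one {u v : Bool} :
    ∀ l1 l2 : List Bool, (∀ b ∈ l1, b = u) → (∀ b ∈ l2, b = v) → flips (l1 ++ l2) ≤ 1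
  | [], l2, _, h2 => by rw [List.nil_append, flips_all_eq l2 h2]; omega
  | [a], l2, _, h2 => by
      cases l2 with
      | nil => simp [flips]
      | cons c l2' =>
          rw [List.singleton_append, flips_cons_cons,
            flips_all_eq (c :: l2') h2]
          split <;> omega
  | a :: a' :: l1, l2, h1, h2 => by
      have ha : a = u := h1 a (by simp)
      have ha' : a' = u := h1 a' (by simp)
      have := flips_le_one (a' :: l1) l2 (fun c hc => h1 c (List.mem_cons_of_mem _ hc)) h2
      rw [List.cons_append, List.cons_append, flips_cons_cons,
        if_pos (ha.trans ha'.symm)]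
      simpa using this

lemma flips_append_cons :
    ∀ (l1 : List Bool) (b : Bool) (l2 : List Bool),
      flips (l1 ++ b :: l2) = flips (l1 ++ [b]) + flips (b :: l2)
  | [], b, l2 => by simp [flips]
  | [a], b, l2 => by
      simp only [List.singleton_append, flips_cons_cons]
      simp [flips]
  | a :: a' :: l1, b, l2 => by
      have := flips_append_cons (a' :: l1) b l2
      simp only [List.cons_append, flips_cons_cons] at *
      omega

lemma one_le_flips : ∀ (l1 : List Bool) (u v : Bool) (l2 : List Bool), u ≠ v →
    1 ≤ flips (u :: (l1 ++ v :: l2))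
  | [], u, v, l2, huv => by
      rw [List.nil_append, flips_cons_cons, if_neg huv]; omega
  | a :: l1, u, v, l2, huv => by
      rw [List.cons_append, flips_cons_cons]
      by_cases hav : a = v
      · subst hav; rw [if_neg huv]; omega
      · have := one_le_flips l1 a v l2 hav
        omega

lemma two_le_flips {x y : Bool} (hxy : x ≠ y) (l1 l2 l3 l4 : List Bool) :
    2 ≤ flips (l1 ++ x :: (l2 ++ y :: (l3 ++ x :: l4))) := by
  rw [flips_append_cons l1 x (l2 ++ y :: (l3 ++ x :: l4))]
  have h2 : flips (x :: (l2 ++ y :: (l3 ++ x :: l4)))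
      = flips ((x :: l2) ++ [y]) + flips (y :: (l3 ++ x :: l4)) := by
    have := flips_append_cons (x :: l2) y (l3 ++ x :: l4)
    simpa using this
  have ha : 1 ≤ flips ((x :: l2) ++ [y]) := by
    have := one_le_flips l2 x y [] hxy
    simpa using this
  have hb : 1 ≤ flips (y :: (l3 ++ x :: l4)) := one_le_flips l3 y x l4 (Ne.symm hxy)
  omega

lemma two_le_flips' {x y : Bool} (hxy : x ≠ y) (l1 l4 : List Bool) :
    2 ≤ flips (l1 ++ x :: y :: x :: l4) := by
  simpa using two_le_flips hxy l1 [] [] l4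

lemma two_le_flips'' {x y : Bool} (hxy : x ≠ y) (l4 : List Bool) :
    2 ≤ flips (x :: y :: x :: l4) := by
  simpa using two_le_flips' hxy [] l4

lemma flips_map_not : ∀ l : List Bool, flips (l.map (fun b => !b)) = flips l
  | [] => rfl
  | [_] => rfl
  | a :: b :: l => by
      have := flips_map_not (b :: l)
      simp only [List.map_cons, flips_cons_cons] at *
      cases a <;> cases b <;> simp_all


variable {V : Type*} [DecidableEq V]

lemma patt_cons_cons (a b : V) (l : List V) :
    pattern11Count (a :: b :: l) = (if a = b then 1 else 0) + pattern11Count (b :: l) := by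
  by_cases h : a = b <;>
    simp [pattern11Count, List.zip_cons_cons, List.filter_cons, h, Nat.add_comm]

/-- the 2-letter block encoding the relative order of `x` and `y` -/
def block (x y : V) (b : Bool) : List V := if b then [x, y] else [y, x]

def blocksW (x y : V) (bs : List Bool) : List V := (bs.map (block x y)).flatten

lemma patt_block_blocks {x y : V} (hxy : x ≠ y) :
    ∀ (bs : List Bool) (b : Bool),
      pattern11Count (block x y b ++ blocksW x y bs) = flips (b :: bs)
  | [], b => by
      cases b <;> simp [block, blocksW, pattern11Count, hxy, Ne.symm hxy, flips]
  | b' :: bs, b => by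
      have IH := patt_block_blocks hxy bs b'
      simp only [blocksW, List.map_cons, List.flatten_cons]
      cases b <;> cases b' <;>
        (simp only [block, blocksW, Bool.false_eq_true, ite_true, ite_false,
          List.cons_append, List.nil_append] at IH ⊢ <;>
         rw [patt_cons_cons, patt_cons_cons, IH] <;>
         simp [flips, hxy, Ne.symm hxy])

lemma patt_blocksW {x y : V} (hxy : x ≠ y) (bs : List Bool) :
    pattern11Count (blocksW x y bs) = flips bs := by
  cases bs with
  | nil => rfl
  | cons b bs =>
      have := patt_block_blocks hxy bs b
      simpa [blocksW] using this


variable {V : Type*} [DecidableEq V] [Fintype V]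

/-- the permutation of `V` sorted by the priority function `π` -/
noncomputable def sortedPerm (π : V → ℚ) : List V :=
  (Finset.univ.toList (α := V)).mergeSort (fun u v => decide (π u ≤ π v))

lemma sortedPerm_isPerm (π : V → ℚ) : IsPermWord (sortedPerm π) := by
  constructor
  · exact ((List.mergeSort_perm _ _).symm).nodup Finset.univ.nodup_toList
  · intro v
    simp [sortedPerm, List.mem_mergeSort]

lemma sortedPerm_sorted (π : V → ℚ) :
    (sortedPerm π).Pairwise (fun u v => π u ≤ π v) := by
  have h := List.pairwise_mergeSort (le := fun u v => decide (π u ≤ π v))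
    (fun a b c hab hbc => by simp_all; linarith)
    (fun a b => by simpa using le_total (π a) (π b))
    (Finset.univ.toList (α := V))
  exact h.imp (fun h' => by simpa using h')

lemma restrict_sortedPerm {π : V → ℚ} (hinj : Function.Injective π) {x y : V} (hxy : x ≠ y) :
    restrictWord (sortedPerm π) x y = if π x ≤ π y then [x, y] else [y, x] := by
  set l := restrictWord (sortedPerm π) x y with hl
  have hsub : List.Sublist l (sortedPerm π) := List.filter_sublist
  have hsort : l.Pairwise (fun u v => π u ≤ π v) := (sortedPerm_sorted π).sublist hsub
  have hnd : l.Nodup := (sortedPerm_isPerm π).1.sublist hsub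
  have hx : x ∈ l := by
    simp [hl, restrictWord, List.mem_filter, (sortedPerm_isPerm π).2 x]
  have hy : y ∈ l := by
    simp [hl, restrictWord, List.mem_filter, (sortedPerm_isPerm π).2 y]
  have hmem : ∀ z ∈ l, z = x ∨ z = y := by
    intro z hz
    have := (List.mem_filter.1 hz).2
    simpa using this
  clear_value l
  clear hl hsub
  rcases l with _ | ⟨a, _ | ⟨b, t⟩⟩
  · exact absurd hx (by simp)
  · simp only [List.mem_singleton] at hx hy
    exact absurd (hx.trans hy.symm) hxy
  · have hab : a ≠ b := by
      intro h; exact (List.nodup_cons.1 hnd).1 (h ▸ List.mem_cons_self)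
    have ht : t = [] := by
      cases t with
      | nil => rfl
      | cons c t' =>
          exfalso
          rcases hmem c (by simp) with hc | hc <;>
            rcases hmem a (by simp) with ha | ha <;>
            rcases hmem b (by simp) with hb | hb <;>
            simp_all [List.nodup_cons]
    subst ht
    have hle : π a ≤ π b := by
      have := List.pairwise_cons.1 hsort
      exact this.1 b (by simp)
    rcases hmem a (by simp) with ha | ha <;> rcases hmem b (by simp) with hb | hb
    · exact absurd (ha.trans hb.symm) hab
    · subst ha; subst hb; rw [if_pos hle]
    · subst ha; subst hb
      rw [if_neg]
      intro hle'
      exact hxy (hinj (le_antisymm hle' hle))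
    · exact absurd (ha.trans hb.symm) hab

lemma restrict_flatten (ps : List (List V)) (x y : V) :
    restrictWord ps.flatten x y = (ps.map (fun p => restrictWord p x y)).flatten := by
  induction ps with
  | nil => rfl
  | cons p ps ih => simp_all [restrictWord, List.filter_append]


lemma patt_restrict (πs : List (V → ℚ)) (hinj : ∀ π ∈ πs, Function.Injective π)
    {x y : V} (hxy : x ≠ y) :
    pattern11Count (restrictWord (πs.map sortedPerm).flatten x y)
      = flips (πs.map (fun π => decide (π x ≤ π y))) := by
  rw [restrict_flatten, List.map_map]
  have h : πs.map (fun π => restrictWord (sortedPerm π) x y)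
      = (πs.map (fun π => decide (π x ≤ π y))).map (block x y) := by
    rw [List.map_map]
    apply List.map_congr_left
    intro π hπ
    rw [restrict_sortedPerm (hinj π hπ) hxy]
    by_cases h : π x ≤ π y <;> simp [block, h]
  rw [show ((fun p => restrictWord p x y) ∘ sortedPerm) = fun π => restrictWord (sortedPerm π) x y from rfl, h]
  exact patt_blocksW hxy _


noncomputable section Constr

variable {V : Type*} [DecidableEq V] [Fintype V]

/-- rank of a vertex -/
def rk (v : V) : ℕ := (Fintype.equivFin V v : ℕ)

lemma rk_inj : Function.Injective (rk (V := V)) := fun u v h =>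
  (Fintype.equivFin V).injective (Fin.ext h)

lemma rk_lt (v : V) : rk v < Fintype.card V := (Fintype.equivFin V v).2

def pos (c : ℕ) (d : ℚ) : ℚ := (c : ℚ) - 1 + d

def d0 (v : V) : ℚ := ((rk v : ℚ) + 1) / (Fintype.card V + 2)

def d1 (v : V) : ℚ := ((Fintype.card V : ℚ) - rk v) / (Fintype.card V + 2)

lemma card_pos2 : (0:ℚ) < (Fintype.card V : ℚ) + 2 := by positivity

lemma d0_pos (v : V) : 0 < d0 v := by
  apply div_pos (by positivity) (card_pos2 (V := V))

lemma d0_lt_one (v : V) : d0 v < 1 := by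
  rw [d0, div_lt_one (card_pos2 (V := V))]
  have := rk_lt v
  have : (rk v : ℚ) < Fintype.card V := by exact_mod_cast this
  linarith

lemma d1_pos (v : V) : 0 < d1 v := by
  apply div_pos _ (card_pos2 (V := V))
  have := rk_lt v
  have : (rk v : ℚ) < Fintype.card V := by exact_mod_cast this
  linarith

lemma d1_lt_one (v : V) : d1 v < 1 := by
  rw [d1, div_lt_one (card_pos2 (V := V))]
  have : (0:ℚ) ≤ (rk v : ℚ) := by positivity
  linarith

lemma d0_le_iff {u v : V} : d0 u ≤ d0 v ↔ rk u ≤ rk v := by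
  rw [d0, d0, div_le_div_iff_of_pos_right (card_pos2 (V := V))]
  constructor
  · intro h
    exact_mod_cast (by linarith : (rk u : ℚ) ≤ rk v)
  · intro h
    have : (rk u : ℚ) ≤ rk v := by exact_mod_cast h
    linarith

lemma d1_le_iff {u v : V} : d1 u ≤ d1 v ↔ rk v ≤ rk u := by
  rw [d1, d1, div_le_div_iff_of_pos_right (card_pos2 (V := V))]
  constructor
  · intro h
    exact_mod_cast (by linarith : (rk v : ℚ) ≤ rk u)
  · intro h
    have : (rk v : ℚ) ≤ rk u := by exact_mod_cast h
    linarith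

lemma d0_inj : Function.Injective (d0 (V := V)) := by
  intro u v h
  exact rk_inj (le_antisymm (d0_le_iff.1 h.le) (d0_le_iff.1 h.ge))

lemma d1_inj : Function.Injective (d1 (V := V)) := by
  intro u v h
  exact rk_inj (le_antisymm (d1_le_iff.1 h.ge) (d1_le_iff.1 h.le))

/-- `pos c d ≤ ρ ↔ c ≤ ρ` when `0 < d < 1` -/
lemma pos_le {c ρ : ℕ} {d : ℚ} (h0 : 0 < d) (h1 : d < 1) :
    pos c d ≤ (ρ : ℚ) ↔ c ≤ ρ := by
  rw [pos]
  constructor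
  · intro h
    by_contra hc
    push_neg at hc
    have : (ρ : ℚ) + 1 ≤ c := by exact_mod_cast hc
    linarith
  · intro h
    have : (c : ℚ) ≤ ρ := by exact_mod_cast h
    linarith

lemma le_pos {c ρ : ℕ} {d : ℚ} (h0 : 0 < d) (h1 : d < 1) :
    (ρ : ℚ) ≤ pos c d ↔ ρ < c := by
  rw [pos]
  constructor
  · intro h
    by_contra hc
    push_neg at hc
    have : (c : ℚ) ≤ ρ := by exact_mod_cast hc
    linarith
  · intro h
    have : (ρ : ℚ) + 1 ≤ c := by exact_mod_cast h
    linarith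

lemma pos_ne {c ρ : ℕ} {d : ℚ} (h0 : 0 < d) (h1 : d < 1) :
    (ρ : ℚ) ≠ pos c d := by
  intro h
  have h2 := (le_pos h0 h1 (c := c) (ρ := ρ)).1 h.le
  have h3 := (pos_le h0 h1 (c := c) (ρ := ρ)).1 h.ge
  omega

variable (G : SimpleGraph V) (A : Set V)

open Classical in
/-- there is a non-neighbour of `b` in `A` at rank `ℓ` -/
def wig (b : V) (ℓ : ℕ) : Prop := ∃ a ∈ A, rk a = ℓ ∧ ¬ G.Adj a b

open Classical in
def pi0 (v : V) : ℚ := if v ∈ A then (rk v : ℚ) else pos 0 (d0 v)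

open Classical in
def pi1 (v : V) : ℚ := if v ∈ A then (rk v : ℚ) else pos 0 (d1 v)

open Classical in
def Phi (ℓ : ℕ) (v : V) : ℚ := if v ∈ A then (rk v : ℚ) else pos (ℓ + 1) (d0 v)

open Classical in
def Psi (ℓ : ℕ) (v : V) : ℚ :=
  if v ∈ A then (rk v : ℚ) else pos (if wig G A v ℓ then ℓ else ℓ + 1) (d0 v)

def piList : List (V → ℚ) :=
  [pi0 A, pi1 A, pi0 A] ++
    ((List.range (Fintype.card V)).map (fun ℓ => [Phi A ℓ, Psi G A ℓ, Phi A ℓ])).flatten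

lemma mem_piList {π : V → ℚ} (h : π ∈ piList G A) :
    π = pi0 A ∨ π = pi1 A ∨
      ∃ ℓ, ℓ < Fintype.card V ∧ (π = Phi A ℓ ∨ π = Psi G A ℓ) := by
  simp only [piList, List.mem_append, List.mem_cons, List.not_mem_nil, or_false,
    List.mem_flatten, List.mem_map, List.mem_range] at h
  rcases h with (h | h | h) | ⟨l, ⟨ℓ, hℓ, rfl⟩, hm⟩
  · exact Or.inl h
  · exact Or.inr (Or.inl h)
  · exact Or.inl h
  · simp only [List.mem_cons, List.not_mem_nil, or_false] at hm
    rcases hm with h | h | h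
    · exact Or.inr (Or.inr ⟨ℓ, hℓ, Or.inl h⟩)
    · exact Or.inr (Or.inr ⟨ℓ, hℓ, Or.inr h⟩)
    · exact Or.inr (Or.inr ⟨ℓ, hℓ, Or.inl h⟩)

open Classical in
/-- generic injectivity for priority functions of our shape -/
lemma inj_aux (c : V → ℕ) (d : V → ℚ) (hd0 : ∀ v, 0 < d v) (hd1 : ∀ v, d v < 1)
    (hinj : ∀ u v, d u = d v → u = v) :
    Function.Injective (fun v => if v ∈ A then (rk v : ℚ) else pos (c v) (d v)) := by
  classical
  intro u v h
  simp only at h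
  by_cases hu : u ∈ A <;> by_cases hv : v ∈ A
  · rw [if_pos hu, if_pos hv] at h
    exact rk_inj (by exact_mod_cast h)
  · rw [if_pos hu, if_neg hv] at h
    exact absurd h (pos_ne (hd0 v) (hd1 v))
  · rw [if_neg hu, if_pos hv] at h
    exact absurd h.symm (pos_ne (hd0 u) (hd1 u))
  · rw [if_neg hu, if_neg hv] at h
    simp only [pos] at h
    have hcc : c u = c v := by
      by_contra hne
      rcases Nat.lt_or_ge (c u) (c v) with hlt | hge
      · have : (c u : ℚ) + 1 ≤ c v := by exact_mod_cast hlt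
        have := hd0 u; have := hd0 v; have := hd1 u; have := hd1 v
        linarith
      · have hlt : c v < c u := by omega
        have : (c v : ℚ) + 1 ≤ c u := by exact_mod_cast hlt
        have := hd0 u; have := hd0 v; have := hd1 u; have := hd1 v
        linarith
    apply hinj
    have : (c u : ℚ) = c v := by exact_mod_cast hcc
    linarith

open Classical in
lemma piList_inj : ∀ π ∈ piList G A, Function.Injective π := by
  intro π hπ
  rcases mem_piList G A hπ with h | h | ⟨ℓ, _, h | h⟩ <;> subst h
  · exact inj_aux A (fun _ => 0) d0 d0_pos d0_lt_one (fun u v h => d0_inj h)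
  · exact inj_aux A (fun _ => 0) d1 d1_pos d1_lt_one (fun u v h => d1_inj h)
  · exact inj_aux A (fun _ => ℓ + 1) d0 d0_pos d0_lt_one (fun u v h => d0_inj h)
  · exact inj_aux A (fun v => if wig G A v ℓ then ℓ else ℓ + 1) d0 d0_pos d0_lt_one
      (fun u v h => d0_inj h)

lemma valA {π : V → ℚ} (hπ : π ∈ piList G A) {v : V} (hv : v ∈ A) : π v = (rk v : ℚ) := by
  rcases mem_piList G A hπ with h | h | ⟨ℓ, _, h | h⟩ <;>
    simp [h, pi0, pi1, Phi, Psi, hv]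

lemma piList_map {β : Type*} (F : (V → ℚ) → β) :
    (piList G A).map F =
      [F (pi0 A), F (pi1 A), F (pi0 A)] ++
        ((List.range (Fintype.card V)).map
          (fun ℓ => [F (Phi A ℓ), F (Psi G A ℓ), F (Phi A ℓ)])).flatten := by
  simp [piList, List.map_flatten, List.map_map, Function.comp_def]

end Constr


end Stmt5Aux

open Stmt5Aux in
/-- every finite split graph (the vertex set is partitioned into a clique `A`
and an independent set `B`) is permutationally 1-11-representable. -/
theorem stmt5 {V : Type*} [Fintype V] [DecidableEq V] (G : SimpleGraph V)
    (A B : Set V) (hcover : A ∪ B = Set.univ) (hdisj : Disjoint A B)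
    (hclique : G.IsClique A)
    (hindep : ∀ x ∈ B, ∀ y ∈ B, ¬ G.Adj x y) :
    PermRepresentable 1 G := by
  classical
  have hAB : ∀ v : V, v ∈ A ∨ v ∈ B := by
    intro v
    have hv : v ∈ A ∪ B := by rw [hcover]; trivial
    exact hv
  have hBnA : ∀ v ∈ B, v ∉ A := fun v hv ha => Set.disjoint_left.1 hdisj ha hv
  refine ⟨(piList G A).map sortedPerm, ?_, ?_, ?_⟩
  · intro p hp
    rcases List.mem_map.1 hp with ⟨π, _, rfl⟩
    exact sortedPerm_isPerm π
  · intro v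
    exact List.mem_flatten.2 ⟨sortedPerm (pi0 A),
      List.mem_map_of_mem (by simp [piList]), (sortedPerm_isPerm _).2 v⟩
  · -- symmetry helper
    have hswap : ∀ x y : V, x ≠ y →
        flips ((piList G A).map fun π => decide (π y ≤ π x))
          = flips ((piList G A).map fun π => decide (π x ≤ π y)) := by
      intro x y hxy
      have h : ((piList G A).map fun π => decide (π y ≤ π x))
          = ((piList G A).map fun π => decide (π x ≤ π y)).map (fun b => !b) := by
        rw [List.map_map]
        apply List.map_congr_left
        intro π hπ
        have hne : π x ≠ π y := (piList_inj G A π hπ).ne hxy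
        rcases lt_or_gt_of_ne hne with h | h <;>
          simp [Function.comp, le_of_lt h, not_le.2 h]
      rw [h, flips_map_not]
    -- the key asymmetric case : x in the clique, y in the independent set
    have key : ∀ x y : V, x ≠ y → x ∈ A → y ∈ B →
        (G.Adj x y ↔ flips ((piList G A).map fun π => decide (π x ≤ π y)) ≤ 1) := by
      intro x y hxy hx hy
      have hyA : y ∉ A := hBnA y hy
      have hρ : rk x < Fintype.card V := rk_lt x
      have hvx0 : pi0 A x = ((rk x : ℕ) : ℚ) := if_pos hx
      have hD : ∀ c : ℕ, decide (((rk x : ℕ) : ℚ) ≤ pos c (d0 y)) = decide (rk x < c) :=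
        fun c => decide_eq_decide.2 (le_pos (d0_pos y) (d0_lt_one y))
      have e0 : decide (pi0 A x ≤ pi0 A y) = false := by
        rw [show pi0 A y = pos 0 (d0 y) from if_neg hyA, hvx0, hD 0]
        simp
      have hD1 : ∀ c : ℕ, decide (((rk x : ℕ) : ℚ) ≤ pos c (d1 y)) = decide (rk x < c) :=
        fun c => decide_eq_decide.2 (le_pos (d1_pos y) (d1_lt_one y))
      have e1 : decide (pi1 A x ≤ pi1 A y) = false := by
        rw [show pi1 A x = ((rk x : ℕ) : ℚ) from if_pos hx,
          show pi1 A y = pos 0 (d1 y) from if_neg hyA, hD1 0]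
        simp
      have eΦ : ∀ ℓ : ℕ, decide (Phi A ℓ x ≤ Phi A ℓ y) = decide (rk x < ℓ + 1) := by
        intro ℓ
        rw [show Phi A ℓ x = ((rk x : ℕ) : ℚ) from if_pos hx,
          show Phi A ℓ y = pos (ℓ + 1) (d0 y) from if_neg hyA, hD (ℓ + 1)]
      have eΨ : ∀ ℓ : ℕ, decide (Psi G A ℓ x ≤ Psi G A ℓ y)
          = decide (rk x < if wig G A y ℓ then ℓ else ℓ + 1) := by
        intro ℓ
        rw [show Psi G A ℓ x = ((rk x : ℕ) : ℚ) from if_pos hx,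
          show Psi G A ℓ y = pos (if wig G A y ℓ then ℓ else ℓ + 1) (d0 y) from if_neg hyA,
          hD _]
      by_cases hadj : G.Adj x y
      · -- adjacent: at most one change
        simp only [hadj, true_iff]
        have hnw : ¬ wig G A y (rk x) := by
          rintro ⟨a, _, hrk, hna⟩
          exact hna (rk_inj hrk ▸ hadj)
        rw [piList_map,
          show List.range (Fintype.card V)
              = List.range (rk x) ++ (List.range (Fintype.card V - rk x)).map (rk x + ·) by
            rw [← List.range_add]
            congr 1
            omega,
          List.map_append, List.flatten_append, ← List.append_assoc]
        refine flips_le_one (u := false) (v := true) _ _ ?_ ?_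
        · intro b hb
          rcases List.mem_append.1 hb with hb | hb
          · simp only [List.mem_cons, List.not_mem_nil, or_false] at hb
            rcases hb with rfl | rfl | rfl
            · exact e0
            · exact e1
            · exact e0
          · rcases List.mem_flatten.1 hb with ⟨l, hl, hbl⟩
            rcases List.mem_map.1 hl with ⟨ℓ, hℓ, rfl⟩
            rw [List.mem_range] at hℓ
            simp only [List.mem_cons, List.not_mem_nil, or_false] at hbl
            rcases hbl with rfl | rfl | rfl
            · rw [eΦ ℓ]; simp only [decide_eq_false_iff_not]; omega
            · rw [eΨ ℓ]
              by_cases hw : wig G A y ℓ <;>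
                simp only [hw, if_true, if_false, decide_eq_false_iff_not] <;> omega
            · rw [eΦ ℓ]; simp only [decide_eq_false_iff_not]; omega
        · intro b hb
          rcases List.mem_flatten.1 hb with ⟨l, hl, hbl⟩
          rcases List.mem_map.1 hl with ⟨ℓ', hl', rfl⟩
          rcases List.mem_map.1 hl' with ⟨k, _, rfl⟩
          simp only [List.mem_cons, List.not_mem_nil, or_false] at hbl
          rcases hbl with rfl | rfl | rfl
          · rw [eΦ]; simp only [decide_eq_true_eq]; omega
          · rw [eΨ]
            by_cases hw : wig G A y (rk x + k)
            · have hk : k ≠ 0 := by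
                rintro rfl
                exact hnw (by simpa using hw)
              simp only [hw, if_true, decide_eq_true_eq]
              omega
            · simp only [hw, if_false, decide_eq_true_eq]
              omega
          · rw [eΦ]; simp only [decide_eq_true_eq]; omega
      · -- non adjacent: at least two changes
        have hwig : wig G A y (rk x) := ⟨x, hx, rfl, hadj⟩
        have h2 : 2 ≤ flips ((piList G A).map fun π => decide (π x ≤ π y)) := by
          rw [piList_map,
            show List.range (Fintype.card V)
                = List.range (rk x)
                  ++ rk x :: (List.range (Fintype.card V - (rk x + 1))).map ((rk x + 1) + ·) by
              rw [show Fintype.card V = (rk x + 1) + (Fintype.card V - (rk x + 1)) by omega,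
                List.range_add, List.range_succ]
              simp,
            List.map_append, List.flatten_append, List.map_cons, List.flatten_cons,
            eΦ (rk x), eΨ (rk x), if_pos hwig,
            show decide (rk x < rk x + 1) = true by simp,
            show decide (rk x < rk x) = false by simp,
            ← List.append_assoc, ← List.append_assoc]
          have h3 := two_le_flips' (show (true : Bool) ≠ false by decide)
            ([decide (pi0 A x ≤ pi0 A y), decide (pi1 A x ≤ pi1 A y),
                decide (pi0 A x ≤ pi0 A y)] ++
              ((List.range (rk x)).map (fun ℓ =>
                [decide (Phi A ℓ x ≤ Phi A ℓ y), decide (Psi G A ℓ x ≤ Psi G A ℓ y),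
                  decide (Phi A ℓ x ≤ Phi A ℓ y)])).flatten)
            (((List.range (Fintype.card V - (rk x + 1))).map (fun k => rk x + 1 + k)).map
              (fun ℓ =>
                [decide (Phi A ℓ x ≤ Phi A ℓ y), decide (Psi G A ℓ x ≤ Psi G A ℓ y),
                  decide (Phi A ℓ x ≤ Phi A ℓ y)])).flatten
          simpa [List.append_assoc, List.cons_append, List.nil_append] using h3
        constructor
        · intro h; exact absurd h hadj
        · intro h; exact absurd (h2.trans h) (by norm_num)
    intro x y hxy
    rw [patt_restrict (piList G A) (piList_inj G A) hxy]
    rcases hAB x with hx | hx <;> rcases hAB y with hy | hy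
    · -- both in the clique
      have hadj : G.Adj x y := hclique hx hy hxy
      have h0 : flips ((piList G A).map fun π => decide (π x ≤ π y)) = 0 := by
        apply flips_all_eq (u := decide (((rk x : ℕ) : ℚ) ≤ ((rk y : ℕ) : ℚ)))
        intro b hb
        rcases List.mem_map.1 hb with ⟨π, hπ, rfl⟩
        rw [valA G A hπ hx, valA G A hπ hy]
      simp [hadj, h0]
    · exact key x y hxy hx hy
    · rw [SimpleGraph.adj_comm, ← hswap x y hxy]
      exact key y x hxy.symm hy hx
    · -- both independent
      have hnadj := hindep x hx y hy
      have hxA := hBnA x hx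
      have hyA := hBnA y hy
      have hne : rk x ≠ rk y := fun h => hxy (rk_inj h)
      have e0 : decide (pi0 A x ≤ pi0 A y) = decide (rk x ≤ rk y) := by
        rw [show pi0 A x = pos 0 (d0 x) from if_neg hxA,
          show pi0 A y = pos 0 (d0 y) from if_neg hyA]
        apply decide_eq_decide.2
        rw [show (pos 0 (d0 x) ≤ pos 0 (d0 y)) ↔ d0 x ≤ d0 y by
          unfold pos; constructor <;> intro <;> linarith]
        exact d0_le_iff
      have e1 : decide (pi1 A x ≤ pi1 A y) = decide (rk y ≤ rk x) := by
        rw [show pi1 A x = pos 0 (d1 x) from if_neg hxA,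
          show pi1 A y = pos 0 (d1 y) from if_neg hyA]
        apply decide_eq_decide.2
        rw [show (pos 0 (d1 x) ≤ pos 0 (d1 y)) ↔ d1 x ≤ d1 y by
          unfold pos; constructor <;> intro <;> linarith]
        exact d1_le_iff
      have hne2 : decide (rk x ≤ rk y) ≠ decide (rk y ≤ rk x) := by
        rcases Nat.lt_or_ge (rk x) (rk y) with h | h
        · simp [Nat.le_of_lt h, Nat.not_le.2 h]
        · have h' : rk y < rk x := by omega
          simp [Nat.le_of_lt h', Nat.not_le.2 h']
      have h2 : 2 ≤ flips ((piList G A).map fun π => decide (π x ≤ π y)) := by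
        rw [piList_map]
        simp only [List.cons_append, List.nil_append]
        rw [e0, e1]
        exact two_le_flips'' hne2 _
      constructor
      · intro h; exact absurd h hnadj
      · intro h; exact absurd (h2.trans h) (by norm_num)
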